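/- Let f : ℤ → {0,1} be a weight diagram with n black balls. Define g(i) = (-1)^(f(i)+1), r⁻(i,j) = -Σ_{s=j+1}^{i} g(s) for j < i, and for j ∉ c = f⁻¹(1) define j⇢▼ = {i > j : r⁻(i,j) = 0 and r⁻(s,j) ≥ 0 for all j < s < i}. If j₁ < j₂ are both empty positions, i₁ ∈ j₁⇢▼ and i₂ ∈ j₂⇢▼, then either i₂ < i₁ or i₁ < j₂. In particular j₁⇢▼ ∩ j₂⇢▼ = ∅. -/

import Mathlib

/-- The ±1 marker of a weight diagram `f : ℤ → {0,1}`: `g(i) = (-1)^(f(i)+1)`,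
i.e. `1` on black balls and `-1` on empty positions. -/
def bg (f : ℤ → ℤ) (i : ℤ) : ℤ := if f i = 1 then 1 else -1

/-- `r⁺(i,j) = Σ_{s=j}^{i-1} g(s)`. -/
noncomputable def rpl (f : ℤ → ℤ) (i j : ℤ) : ℤ := ∑ s ∈ Finset.Icc j (i - 1), bg f s

/-- `r⁻(i,j) = -Σ_{s=j+1}^{i} g(s)`. -/
noncomputable def rmi (f : ℤ → ℤ) (i j : ℤ) : ℤ := -∑ s ∈ Finset.Icc (j + 1) i, bg f s

/-- The set `⟵i▲(f)` of targets of solid arrows starting at position `i`: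
`{j < i : r⁺(i,j) = 0 and r⁺(i,s) ≥ 0 for all j < s < i}`. -/
def solidT (f : ℤ → ℤ) (i : ℤ) : Set ℤ :=
  {j | j < i ∧ rpl f i j = 0 ∧ ∀ s, j < s → s < i → 0 ≤ rpl f i s}

/-- The set `j⇢▼(f)` of targets of dashed arrows starting at position `j`:
`{i > j : r⁻(i,j) = 0 and r⁻(s,j) ≥ 0 for all j < s < i}`. -/
def dashT (f : ℤ → ℤ) (j : ℤ) : Set ℤ :=
  {i | j < i ∧ rmi f i j = 0 ∧ ∀ s, j < s → s < i → 0 ≤ rmi f s j}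

/-- `f : ℤ → ℤ` is a weight diagram with `n` black balls: it takes values in `{0,1}`
and has exactly `n` positions with value `1`. -/
def IsWD (f : ℤ → ℤ) (n : ℕ) : Prop :=
  (∀ i, f i = 0 ∨ f i = 1) ∧ {i | f i = 1}.Finite ∧ {i | f i = 1}.ncard = n


lemma rmi_add (f : ℤ → ℤ) {j k i : ℤ} (h1 : j ≤ k) (h2 : k ≤ i) :
    rmi f i j = rmi f i k + rmi f k j := by
  unfold rmi
  have : ∀ a b : ℤ, Finset.Icc (a + 1) b = Finset.Ioc a b := by
    intro a b; ext x; simp [Int.add_one_le_iff]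
  rw [this, this, this]
  have h : (∑ s ∈ Finset.Ioc j k, bg f s) + ∑ s ∈ Finset.Ioc k i, bg f s = ∑ s ∈ Finset.Ioc j i, bg f s := by
    rw [← Finset.Ioc_union_Ioc_eq_Ioc h1 h2, Finset.sum_union (by
      rw [Finset.disjoint_left]; intro x hx hx'
      simp only [Finset.mem_Ioc] at hx hx'; omega)]
  linarith

lemma rmi_self (f : ℤ → ℤ) (j : ℤ) : rmi f j j = 0 := by
  unfold rmi
  rw [Finset.Icc_eq_empty (by omega)]
  simp

lemma rmi_succ (f : ℤ → ℤ) (j : ℤ) (hj : f j ≠ 1) : rmi f j (j - 1) = 1 := by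
  unfold rmi
  have : Finset.Icc (j - 1 + 1) j = {j} := by
    ext x; simp only [Finset.mem_Icc, Finset.mem_singleton]; omega
  rw [this]
  simp [bg, hj]

lemma stmt5_main (f : ℤ → ℤ) (j₁ j₂ i₁ i₂ : ℤ)
    (hj₂ : f j₂ ≠ 1) (h12 : j₁ < j₂)
    (hi₁ : i₁ ∈ dashT f j₁) (hi₂ : i₂ ∈ dashT f j₂) :
    i₂ < i₁ ∨ i₁ < j₂ := by
  by_contra h
  push_neg at h
  obtain ⟨hle, hge⟩ := h
  obtain ⟨hj₁i₁, hr₁, hmin₁⟩ := hi₁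
  obtain ⟨hj₂i₂, hr₂, hmin₂⟩ := hi₂
  -- rmi f j₂ j₁ ≥ 1
  have hsplit : rmi f j₂ j₁ = rmi f j₂ (j₂ - 1) + rmi f (j₂ - 1) j₁ :=
    rmi_add f (by omega) (by omega)
  have h1 : rmi f j₂ (j₂ - 1) = 1 := rmi_succ f j₂ hj₂
  have h2 : 0 ≤ rmi f (j₂ - 1) j₁ := by
    rcases eq_or_lt_of_le (by omega : j₁ ≤ j₂ - 1) with h | h
    · rw [← h, rmi_self]
    · exact hmin₁ _ h (by omega)
  have hpos : 1 ≤ rmi f j₂ j₁ := by omega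
  -- rmi f i₁ j₂ ≤ -1
  have hsplit2 : rmi f i₁ j₁ = rmi f i₁ j₂ + rmi f j₂ j₁ :=
    rmi_add f (by omega) (by omega)
  have hneg : rmi f i₁ j₂ ≤ -1 := by omega
  -- but rmi f i₁ j₂ ≥ 0
  rcases eq_or_lt_of_le hge with h | h
  · rw [← h, rmi_self] at hneg; omega
  · rcases eq_or_lt_of_le hle with h' | h'
    · rw [h'] at hneg; omega
    · have := hmin₂ _ h h'; omega

/-- Two dashed arrows in a weight diagram can only intersect at a common
source: if `j₁ < j₂` are empty positions, `i₁ ∈ j₁⇢▼` and `i₂ ∈ j₂⇢▼`, then either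
`i₂ < i₁` or `i₁ < j₂`; in particular `j₁⇢▼ ∩ j₂⇢▼ = ∅`. -/
theorem stmt5 (n : ℕ) (f : ℤ → ℤ) (hf : IsWD f n) (j₁ j₂ i₁ i₂ : ℤ)
    (hj₁ : f j₁ ≠ 1) (hj₂ : f j₂ ≠ 1) (h12 : j₁ < j₂)
    (hi₁ : i₁ ∈ dashT f j₁) (hi₂ : i₂ ∈ dashT f j₂) :
    (i₂ < i₁ ∨ i₁ < j₂) ∧ dashT f j₁ ∩ dashT f j₂ = ∅ := by
  constructor
  · exact stmt5_main f j₁ j₂ i₁ i₂ hj₂ h12 hi₁ hi₂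
  · ext i
    simp only [Set.mem_inter_iff, Set.mem_empty_iff_false, iff_false, not_and]
    intro h1 h2
    have := stmt5_main f j₁ j₂ i i hj₂ h12 h1 h2
    have := h2.1
    omega
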